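/- Let α, Γ, σ₁, σ₂ > 0 and let h : ℝ → ℝ be continuously differentiable, bounded, nondecreasing, with bounded derivative. Set A = √(2Γ)/σ₂, B = √(2(α+Γ))/σ₂, B₀ = √(2α)/σ₁, and define M¹(x) = (1/α)∫_0^∞ h(x + σ₁ z/√(2α)) e^{−z} dz and M²(x) = ρ₋(x)S₋(x) + ρ₊(x)S₊(x), where ρ₊(x) = 2/(2α + σ₂²(B+A)² e^{2Ax}), ρ₋(x) = 2/(2α + σ₂²(B−A)² e^{−2Ax}), S₊(x) = ∫_0^∞ h(x + s/(B+A)) e^{−s} ds, S₋(x) = ∫_0^∞ h(x + s/(B−A)) e^{−s} ds. If B₀ ≤ B − A (equivalently σ₂/σ₁ ≤ √(1+Γ/α) − √(Γ/α)), then M²(x) ≤ M¹(x) for every x ∈ ℝ. -/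
import Mathlib


open MeasureTheory Set

lemma stmt15_aux (α u v : ℝ) (hα : 0 < α) (hu : 0 < u) (hv : 0 < v)
    (huv : u * v = 4 * α ^ 2) :
    2 / (2 * α + u) + 2 / (2 * α + v) = 1 / α := by
  have h1 : (2 * α + u) ≠ 0 := by positivity
  have h2 : (2 * α + v) ≠ 0 := by positivity
  have h3 : α ≠ 0 := ne_of_gt hα
  field_simp
  nlinarith [huv]

/-- Region (a) of the phase diagram: if `B₀ ≤ B − A` then the Brownian arm has
the larger Gittins index at every state. -/
theorem stmt15
    (α Γ σ₁ σ₂ : ℝ) (hα : 0 < α) (hΓ : 0 < Γ) (hσ₁ : 0 < σ₁) (hσ₂ : 0 < σ₂)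
    (h : ℝ → ℝ) (hh : ContDiff ℝ 1 h) (hhb : ∃ C, ∀ x, |h x| ≤ C)
    (hmono : Monotone h) (hhb' : ∃ C, ∀ x, |deriv h x| ≤ C)
    (A B B₀ : ℝ)
    (hA : A = Real.sqrt (2 * Γ) / σ₂)
    (hB : B = Real.sqrt (2 * (α + Γ)) / σ₂)
    (hB₀ : B₀ = Real.sqrt (2 * α) / σ₁)
    (M₁ M₂ : ℝ → ℝ)
    (hM₁ : ∀ x, M₁ x =
      (1 / α) * ∫ z in Ioi (0 : ℝ), h (x + σ₁ * z / Real.sqrt (2 * α)) * Real.exp (-z))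
    (hM₂ : ∀ x, M₂ x =
      (2 / (2 * α + σ₂ ^ 2 * (B - A) ^ 2 * Real.exp (-2 * A * x))) *
          (∫ s in Ioi (0 : ℝ), h (x + s / (B - A)) * Real.exp (-s))
        + (2 / (2 * α + σ₂ ^ 2 * (B + A) ^ 2 * Real.exp (2 * A * x))) *
          (∫ s in Ioi (0 : ℝ), h (x + s / (B + A)) * Real.exp (-s)))
    (hreg : B₀ ≤ B - A) :
    ∀ x, M₂ x ≤ M₁ x := by
  intro x
  obtain ⟨C, hC⟩ := hhb
  have h2α : (0:ℝ) < 2 * α := by linarith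
  have hs2α : (0:ℝ) < Real.sqrt (2 * α) := Real.sqrt_pos.2 h2α
  have hB₀pos : 0 < B₀ := by rw [hB₀]; positivity
  have hApos : 0 < A := by rw [hA]; positivity
  have hBA : 0 < B - A := lt_of_lt_of_le hB₀pos hreg
  have hBA' : 0 < B + A := by linarith
  -- integrability of all integrands
  have key : ∀ c : ℝ, IntegrableOn (fun s => h (x + c * s) * Real.exp (-s)) (Ioi 0) := by
    intro c
    have hcont : Continuous fun s => h (x + c * s) * Real.exp (-s) := by
      exact (hh.continuous.comp (by continuity)).mul (Real.continuous_exp.comp (by continuity))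
    have hexp : IntegrableOn (fun s : ℝ => C * Real.exp (-(1:ℝ) * s)) (Ioi 0) :=
      (exp_neg_integrableOn_Ioi 0 one_pos).const_mul C
    apply Integrable.mono hexp hcont.aestronglyMeasurable.restrict
    filter_upwards [ae_restrict_mem measurableSet_Ioi] with s _
    rw [Real.norm_eq_abs, Real.norm_eq_abs, abs_mul, abs_mul, Real.abs_exp, Real.abs_exp,
      neg_one_mul]
    have h1 : |h (x + c * s)| ≤ |C| := le_trans (hC _) (le_abs_self C)
    exact mul_le_mul_of_nonneg_right h1 (Real.exp_pos _).le
  -- pointwise comparison of the integrals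
  have comp : ∀ c₁ c₂ : ℝ, c₁ ≤ c₂ →
      (∫ s in Ioi (0:ℝ), h (x + c₁ * s) * Real.exp (-s)) ≤
      (∫ s in Ioi (0:ℝ), h (x + c₂ * s) * Real.exp (-s)) := by
    intro c₁ c₂ hc
    apply setIntegral_mono_on (key c₁) (key c₂) measurableSet_Ioi
    intro s hs
    have hs0 : (0:ℝ) ≤ s := le_of_lt hs
    have : x + c₁ * s ≤ x + c₂ * s := by nlinarith
    exact mul_le_mul_of_nonneg_right (hmono this) (Real.exp_pos _).le
  set c₀ : ℝ := σ₁ / Real.sqrt (2 * α) with hc₀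
  have hc₀' : (B - A)⁻¹ ≤ c₀ := by
    have hB₀inv : B₀⁻¹ = c₀ := by
      rw [hB₀, hc₀]; field_simp
    rw [← hB₀inv]
    exact inv_anti₀ hB₀pos hreg
  have hcp : (B + A)⁻¹ ≤ (B - A)⁻¹ := by
    apply inv_anti₀ hBA; linarith
  set I : ℝ := ∫ z in Ioi (0:ℝ), h (x + c₀ * z) * Real.exp (-z) with hI
  have hSm : (∫ s in Ioi (0:ℝ), h (x + s / (B - A)) * Real.exp (-s)) ≤ I := by
    have e : (fun s => h (x + s / (B - A)) * Real.exp (-s))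
        = fun s => h (x + (B - A)⁻¹ * s) * Real.exp (-s) := by
      funext s; rw [div_eq_inv_mul]
    rw [e]; exact comp _ _ hc₀'
  have hSp : (∫ s in Ioi (0:ℝ), h (x + s / (B + A)) * Real.exp (-s)) ≤ I := by
    have e : (fun s => h (x + s / (B + A)) * Real.exp (-s))
        = fun s => h (x + (B + A)⁻¹ * s) * Real.exp (-s) := by
      funext s; rw [div_eq_inv_mul]
    rw [e]; exact comp _ _ (le_trans hcp hc₀')
  have hM₁I : M₁ x = (1 / α) * I := by
    rw [hM₁, hI]
    congr 1
    apply setIntegral_congr_fun measurableSet_Ioi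
    intro s _
    dsimp only
    rw [hc₀, mul_div_right_comm]
  -- the weights
  set u : ℝ := σ₂ ^ 2 * (B - A) ^ 2 * Real.exp (-2 * A * x) with hu
  set v : ℝ := σ₂ ^ 2 * (B + A) ^ 2 * Real.exp (2 * A * x) with hv
  have hupos : 0 < u := by rw [hu]; positivity
  have hvpos : 0 < v := by rw [hv]; positivity
  have hA2 : σ₂ ^ 2 * A ^ 2 = 2 * Γ := by
    have h1 : Real.sqrt (2 * Γ) ^ 2 = 2 * Γ := Real.sq_sqrt (by linarith)
    have h2 : σ₂ ≠ 0 := ne_of_gt hσ₂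
    rw [hA, div_pow, h1]
    field_simp
  have hB2 : σ₂ ^ 2 * B ^ 2 = 2 * (α + Γ) := by
    have h1 : Real.sqrt (2 * (α + Γ)) ^ 2 = 2 * (α + Γ) := Real.sq_sqrt (by positivity)
    have h2 : σ₂ ≠ 0 := ne_of_gt hσ₂
    rw [hB, div_pow, h1]
    field_simp
  have huv : u * v = 4 * α ^ 2 := by
    have hexp : Real.exp (-2 * A * x) * Real.exp (2 * A * x) = 1 := by
      rw [← Real.exp_add]; ring_nf; exact Real.exp_zero
    have h1 : u * v = (σ₂ ^ 2 * B ^ 2 - σ₂ ^ 2 * A ^ 2) ^ 2 *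
        (Real.exp (-2 * A * x) * Real.exp (2 * A * x)) := by
      rw [hu, hv]; ring
    rw [h1, hexp, hA2, hB2]; ring
  have hweight : 2 / (2 * α + u) + 2 / (2 * α + v) = 1 / α :=
    stmt15_aux α u v hα hupos hvpos huv
  have hrm : 0 ≤ 2 / (2 * α + u) := by positivity
  have hrp : 0 ≤ 2 / (2 * α + v) := by positivity
  rw [hM₂, hM₁I, ← hweight, add_mul]
  exact add_le_add (mul_le_mul_of_nonneg_left hSm hrm) (mul_le_mul_of_nonneg_left hSp hrp)
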